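/- The mass flow is additive under composition: for isotopies {h_t}, {k_t} in Homeo(M, μ) of a compact metric space with invariant probability measure μ, both starting at the identity, and for any continuous f : M → ℝ/ℤ, one has θ̃({h_t·k_t concatenation/composition})(f) = θ̃({h_t})(f) + θ̃({k_t})(f), where the composed isotopy is t ↦ h_t ∘ k_t. Equivalently, ∫_M (f∘(h₁∘k₁) − f)‾ dμ = ∫_M (f∘h₁ − f)‾ dμ + ∫_M (f∘k₁ − f)‾ dμ. -/
import Mathlib


open MeasureTheory

/-- Additivity of the mass flow under composition of isotopies:
`θ̃({h_t ∘ k_t})(f) = θ̃({h_t})(f) + θ̃({k_t})(f)`, i.e.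
`∫ (f∘(h₁∘k₁) − f)‾ dμ = ∫ (f∘h₁ − f)‾ dμ + ∫ (f∘k₁ − f)‾ dμ`,
where overlines denote the continuous lifts vanishing at `t = 0`. -/
theorem mass_flow_additive {M : Type*} [MetricSpace M] [CompactSpace M]
    [ConnectedSpace M] [MeasurableSpace M] [BorelSpace M]
    (μ : Measure M) [IsProbabilityMeasure μ]
    (h k : ℝ → M → M)
    (hhcont : Continuous fun p : ℝ × M => h p.1 p.2)
    (hkcont : Continuous fun p : ℝ × M => k p.1 p.2)
    (hh : ∀ t, MeasurePreserving (h t) μ μ) (hkmp : ∀ t, MeasurePreserving (k t) μ μ)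
    (h0 : h 0 = id) (k0 : k 0 = id)
    (f : M → AddCircle (1:ℝ)) (hf : Continuous f)
    (Lh Lk Lhk : ℝ → M → ℝ)
    (hLhc : Continuous fun p : ℝ × M => Lh p.1 p.2)
    (hLkc : Continuous fun p : ℝ × M => Lk p.1 p.2)
    (hLhkc : Continuous fun p : ℝ × M => Lhk p.1 p.2)
    (hLh : ∀ t x, ((Lh t x : ℝ) : AddCircle (1:ℝ)) = f (h t x) - f x)
    (hLk : ∀ t x, ((Lk t x : ℝ) : AddCircle (1:ℝ)) = f (k t x) - f x)
    (hLhk : ∀ t x, ((Lhk t x : ℝ) : AddCircle (1:ℝ)) = f (h t (k t x)) - f x)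
    (hLh0 : ∀ x, Lh 0 x = 0) (hLk0 : ∀ x, Lk 0 x = 0) (hLhk0 : ∀ x, Lhk 0 x = 0) :
    ∫ x, Lhk 1 x ∂μ = (∫ x, Lh 1 x ∂μ) + ∫ x, Lk 1 x ∂μ := by
  -- The defect function
  set g : ℝ × M → ℝ := fun p => Lhk p.1 p.2 - Lh p.1 (k p.1 p.2) - Lk p.1 p.2 with hg
  have cg : Continuous g := by
    apply Continuous.sub (Continuous.sub hLhkc _) hLkc
    exact hLhc.comp (continuous_fst.prodMk hkcont)
  -- g is integer-valued
  have hint : ∀ p : ℝ × M, ∃ n : ℤ, g p = n := by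
    intro p
    have hc : ((g p : ℝ) : AddCircle (1:ℝ)) = 0 := by
      show ((Lhk p.1 p.2 - Lh p.1 (k p.1 p.2) - Lk p.1 p.2 : ℝ) : AddCircle (1:ℝ)) = 0
      rw [QuotientAddGroup.mk_sub, QuotientAddGroup.mk_sub,
        hLhk p.1 p.2, hLh p.1 (k p.1 p.2), hLk p.1 p.2]
      abel
    rcases (AddCircle.coe_eq_zero_iff (1:ℝ)).1 hc with ⟨n, hn⟩
    exact ⟨n, by simpa using hn.symm⟩
  -- hence locally constant
  have hlc : IsLocallyConstant g := by
    rw [IsLocallyConstant.iff_eventually_eq]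
    intro p
    have hev : ∀ᶠ q in nhds p, g q ∈ Metric.ball (g p) (1/2) :=
      cg.continuousAt.preimage_mem_nhds (Metric.ball_mem_nhds _ (by norm_num))
    filter_upwards [hev] with q hq
    rcases hint q with ⟨m, hm⟩
    rcases hint p with ⟨n, hn⟩
    rw [hm, hn, Metric.mem_ball, Real.dist_eq] at hq
    have habs : |((m - n : ℤ) : ℝ)| < 1 := by
      push_cast
      rw [abs_lt] at hq ⊢
      constructor <;> linarith [hq.1, hq.2]
    have : |m - n| < 1 := by exact_mod_cast habs
    have hmn : m = n := by rw [abs_lt] at this; omega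
    rw [hm, hn, hmn]
  -- constant on the connected space ℝ × M, equal to its value at t = 0, i.e. 0
  have hzero : ∀ t x, g (t, x) = 0 := by
    intro t x
    have := hlc.apply_eq_of_preconnectedSpace (t, x) (0, x)
    rw [this]
    simp [hg, hLhk0, hLk0, k0, hLh0]
  have key : ∀ x, Lhk 1 x = Lh 1 (k 1 x) + Lk 1 x := by
    intro x
    have := hzero 1 x
    simp only [hg] at this
    linarith
  -- integrability
  have cLh1 : Continuous fun x => Lh 1 x := hLhc.comp (Continuous.prodMk_right 1)
  have cLk1 : Continuous fun x => Lk 1 x := hLkc.comp (Continuous.prodMk_right 1)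
  have ck1 : Continuous (k 1) := hkcont.comp (Continuous.prodMk_right 1)
  have iLh1 : Integrable (fun x => Lh 1 x) μ :=
    integrableOn_univ.mp (cLh1.continuousOn.integrableOn_compact isCompact_univ)
  have iLk1 : Integrable (fun x => Lk 1 x) μ :=
    integrableOn_univ.mp (cLk1.continuousOn.integrableOn_compact isCompact_univ)
  have iLhk1 : Integrable (fun x => Lh 1 (k 1 x)) μ :=
    integrableOn_univ.mp ((cLh1.comp ck1).continuousOn.integrableOn_compact isCompact_univ)
  have hmap : ∫ x, Lh 1 (k 1 x) ∂μ = ∫ x, Lh 1 x ∂μ := by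
    rw [← (hkmp 1).map_eq, integral_map (hkmp 1).measurable.aemeasurable
      (cLh1.aestronglyMeasurable), (hkmp 1).map_eq]
  calc ∫ x, Lhk 1 x ∂μ = ∫ x, (Lh 1 (k 1 x) + Lk 1 x) ∂μ := by
        exact integral_congr_ae (Filter.Eventually.of_forall key)
    _ = (∫ x, Lh 1 (k 1 x) ∂μ) + ∫ x, Lk 1 x ∂μ := integral_add iLhk1 iLk1
    _ = (∫ x, Lh 1 x ∂μ) + ∫ x, Lk 1 x ∂μ := by rw [hmap]
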